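/- Define functions φ_j(x, s) recursively by φ_0(x) = (x^{k-1} + 1)·log(x)/(x - 1) (extended continuously at x = 1 to the value k, interpreting the limit) and φ_{j+1} = x·∂φ_j/∂x - (s+j)·φ_j. Then for each m there is a constant C_m such that |φ_m(x, s)| ≤ C_m (1 + |s|)^m x^{k-1} for all x ≥ 1 and s ∈ ℂ. -/

import Mathlib

open Complex

/-- The recursively defined functions φ_j(x, s):
φ₀(x) = (x^{k-1}+1) log x / (x-1) (with the removable singularity at x = 1
filled in by the value k), and φ_{j+1} = x·∂φ_j/∂x − (s+j)·φ_j. -/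
noncomputable def phiRec (k : ℕ) : ℕ → ℝ → ℂ → ℂ
  | 0, x, _ =>
      if x = 1 then (k : ℂ)
      else ((x : ℂ) ^ (k - 1) + 1) * (Real.log x : ℂ) / ((x : ℂ) - 1)
  | (j + 1), x, s =>
      (x : ℂ) * deriv (fun t : ℝ => phiRec k j t s) x - (s + j) * phiRec k j x s

namespace PhiAux

noncomputable def Psi (k : ℕ) : ℂ → ℂ := fun z => (z ^ (k-1) + 1) * dslope Complex.log 1 z

noncomputable def G (k : ℕ) : ℂ → ℂ := fun w => Psi k (Complex.exp w)

noncomputable def Gi (k i : ℕ) : ℂ → ℂ := iteratedDeriv i (G k)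

def S : Set ℂ := {w | |w.im| < 2}

lemma isOpen_S : IsOpen S :=
  isOpen_lt (continuous_abs.comp Complex.continuous_im) continuous_const

lemma exp_mem_slitPlane {w : ℂ} (h : w ∈ S) : Complex.exp w ∈ slitPlane := by
  rcases eq_or_ne w.im 0 with h0 | h0
  · refine Or.inl ?_
    rw [Complex.exp_re, h0]
    simpa using Real.exp_pos w.re
  · refine Or.inr ?_
    rw [Complex.exp_im]
    have h2 : |w.im| < 2 := h
    have hπ : (2:ℝ) < Real.pi := by
      have := Real.pi_gt_d6; linarith
    have : Real.sin w.im ≠ 0 := by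
      intro hs
      have := (Real.sin_eq_zero_iff_of_lt_of_lt (by cases abs_lt.mp h2; linarith)
        (by cases abs_lt.mp h2; linarith)).mp hs
      exact h0 this
    positivity

lemma analyticAt_dslope_log {z : ℂ} (hz : z ∈ slitPlane) :
    AnalyticAt ℂ (dslope Complex.log 1) z := by
  rcases eq_or_ne z 1 with rfl | h1
  · obtain ⟨p, hp⟩ := analyticAt_clog hz
    exact ⟨p.fslope, hp.has_fpower_series_dslope_fslope⟩
  · have ha : AnalyticAt ℂ (fun y => (y - 1)⁻¹ • (Complex.log y - Complex.log 1)) z := by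
      have h1' : z - 1 ≠ 0 := sub_ne_zero.mpr h1
      exact (((analyticAt_id.sub analyticAt_const).inv h1').smul
        ((analyticAt_clog hz).sub analyticAt_const))
    refine ha.congr ?_
    filter_upwards [eventually_ne_nhds h1] with y hy
    rw [dslope_of_ne _ hy, slope_def_module]

lemma analyticOnNhd_Psi (k : ℕ) : AnalyticOnNhd ℂ (Psi k) slitPlane := by
  intro z hz
  exact ((analyticAt_id.pow _).add analyticAt_const).mul (analyticAt_dslope_log hz)

lemma analyticOnNhd_G (k : ℕ) : AnalyticOnNhd ℂ (G k) S := by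
  intro w hw
  exact (analyticOnNhd_Psi k _ (exp_mem_slitPlane hw)).comp (analyticAt_cexp)

lemma analyticOnNhd_Gi (k i : ℕ) : AnalyticOnNhd ℂ (Gi k i) S := by
  induction i with
  | zero => exact analyticOnNhd_G k
  | succ i ih =>
      have : Gi k (i+1) = deriv (Gi k i) := by
        ext w; simp [Gi, iteratedDeriv_succ]
      rw [this]
      exact ih.deriv

lemma ofReal_mem_S (u : ℝ) : (u : ℂ) ∈ S := by
  simp [S]

lemma hasDerivAt_Gi_log (k i : ℕ) {x : ℝ} (hx : 0 < x) :
    HasDerivAt (fun t : ℝ => Gi k i ((Real.log t : ℝ) : ℂ))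
      (x⁻¹ • Gi k (i+1) ((Real.log x : ℝ) : ℂ)) x := by
  have hG : HasDerivAt (Gi k i) (Gi k (i+1) ((Real.log x : ℝ) : ℂ))
      ((Real.log x : ℝ) : ℂ) := by
    have h := ((analyticOnNhd_Gi k i) _ (ofReal_mem_S (Real.log x))).differentiableAt.hasDerivAt
    have : deriv (Gi k i) ((Real.log x : ℝ) : ℂ) = Gi k (i+1) ((Real.log x : ℝ) : ℂ) := by
      simp [Gi, iteratedDeriv_succ]
    rwa [this] at h
  have h1 : HasDerivAt (fun y : ℝ => Gi k i ((y : ℝ) : ℂ))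
      (Gi k (i+1) ((Real.log x : ℝ) : ℂ)) (Real.log x) := hG.comp_ofReal
  have h2 : HasDerivAt Real.log x⁻¹ x := Real.hasDerivAt_log (ne_of_gt hx)
  exact h1.scomp x h2

noncomputable def c : ℕ → ℕ → ℂ → ℂ
  | 0, 0, _ => 1
  | 0, _+1, _ => 0
  | j+1, 0, s => -(s + j) * c j 0 s
  | j+1, i+1, s => c j i s - (s + j) * c j (i+1) s

lemma c_eq_zero (s : ℂ) : ∀ j i, j < i → c j i s = 0 := by
  intro j
  induction j with
  | zero => intro i hi; match i, hi with
      | i+1, _ => rfl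
  | succ j ih =>
      intro i hi
      match i, hi with
      | i+1, hi =>
          show c j i s - (s + j) * c j (i+1) s = 0
          rw [ih i (by omega), ih (i+1) (by omega)]
          ring

lemma c_bound (j : ℕ) : ∃ B : ℝ, 0 ≤ B ∧ ∀ i (s : ℂ),
    ‖c j i s‖ ≤ B * (1 + ‖s‖) ^ j := by
  induction j with
  | zero =>
      refine ⟨1, zero_le_one, fun i s => ?_⟩
      match i with
      | 0 => simp [c]
      | i+1 => simp [c]
  | succ j ih =>
      obtain ⟨B, hB0, hB⟩ := ih
      refine ⟨(j+2) * B, by positivity, fun i s => ?_⟩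
      have habs : (0:ℝ) ≤ ‖s‖ := norm_nonneg s
      have h1s : (1:ℝ) ≤ 1 + ‖s‖ := by linarith
      have hsj : ‖s + (j:ℂ)‖ ≤ (j + 1) * (1 + ‖s‖) := by
        calc ‖s + (j:ℂ)‖ ≤ ‖s‖ + ‖(j:ℂ)‖ :=
              norm_add_le _ _
        _ = ‖s‖ + j := by simp
        _ ≤ (j + 1) * (1 + ‖s‖) := by nlinarith
      have hpow : (0:ℝ) ≤ (1 + ‖s‖)^j := by positivity
      match i with
      | 0 =>
          show ‖-(s + j) * c j 0 s‖ ≤ _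
          rw [norm_mul, norm_neg]
          calc ‖s + (j:ℂ)‖ * ‖c j 0 s‖
              ≤ ((j + 1) * (1 + ‖s‖)) * (B * (1 + ‖s‖) ^ j) := by
                apply mul_le_mul hsj (hB 0 s) (norm_nonneg _) (by positivity)
          _ ≤ (j+2) * B * (1 + ‖s‖) ^ (j+1) := by
                rw [pow_succ]
                nlinarith [mul_nonneg (mul_nonneg hB0 hpow) (le_trans zero_le_one h1s)]
      | i+1 =>
          show ‖c j i s - (s + j) * c j (i+1) s‖ ≤ _
          calc ‖c j i s - (s + j) * c j (i+1) s‖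
              ≤ ‖c j i s‖ + ‖s + (j:ℂ)‖ * ‖c j (i+1) s‖ := by
                rw [← norm_mul, sub_eq_add_neg]
                exact (norm_add_le _ _).trans (by rw [norm_neg])
          _ ≤ B * (1 + ‖s‖) ^ j
              + ((j + 1) * (1 + ‖s‖)) * (B * (1 + ‖s‖) ^ j) := by
                have := hB i s
                have := hB (i+1) s
                have := mul_le_mul hsj (hB (i+1) s) (norm_nonneg _) (by positivity)
                linarith
          _ ≤ (j+2) * B * (1 + ‖s‖) ^ (j+1) := by
                rw [pow_succ]
                nlinarith [mul_nonneg (mul_nonneg hB0 hpow) habs]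

lemma phiRec_eq (k : ℕ) (j : ℕ) (s : ℂ) : ∀ x : ℝ, 0 < x → x ≠ 1 →
    phiRec k j x s = ∑ i ∈ Finset.range (j+1), c j i s * Gi k i ((Real.log x : ℝ) : ℂ) := by
  induction j with
  | zero =>
      intro x hx hx1
      have hxC : (x : ℂ) ≠ 1 := by exact_mod_cast hx1
      have hexp : Complex.exp ((Real.log x : ℝ) : ℂ) = (x : ℂ) := by
        rw [← Complex.ofReal_exp, Real.exp_log hx]
      simp only [phiRec, if_neg hx1, zero_add, Finset.sum_range_one]
      show _ = c 0 0 s * Gi k 0 ((Real.log x : ℝ) : ℂ)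
      have : Gi k 0 ((Real.log x : ℝ) : ℂ) = Psi k (x : ℂ) := by
        simp only [Gi, iteratedDeriv_zero, G, hexp]
      rw [this]
      show _ = 1 * _
      rw [one_mul, Psi, dslope_of_ne _ hxC, slope_def_module, Complex.log_one,
        ← Complex.ofReal_log hx.le]
      rw [smul_eq_mul, sub_zero, div_eq_mul_inv]
      ring
  | succ j ih =>
      intro x hx hx1
      set L := ((Real.log x : ℝ) : ℂ)
      have hx0 : (x : ℂ) ≠ 0 := by
        exact_mod_cast ne_of_gt hx
      have hU : {t : ℝ | 0 < t ∧ t ≠ 1} ∈ nhds x := by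
        have hop : IsOpen {t : ℝ | 0 < t ∧ t ≠ 1} :=
          (isOpen_lt continuous_const continuous_id).inter isOpen_ne
        exact hop.mem_nhds ⟨hx, hx1⟩
      have hev : (fun t : ℝ => phiRec k j t s) =ᶠ[nhds x]
          (fun t : ℝ => ∑ i ∈ Finset.range (j+1),
            c j i s * Gi k i ((Real.log t : ℝ) : ℂ)) := by
        filter_upwards [hU] with t ht
        exact ih t ht.1 ht.2
      have hF : HasDerivAt (fun t : ℝ => ∑ i ∈ Finset.range (j+1),
            c j i s * Gi k i ((Real.log t : ℝ) : ℂ))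
          (∑ i ∈ Finset.range (j+1), c j i s * (x⁻¹ • Gi k (i+1) L)) x := by
        apply HasDerivAt.fun_sum
        intro i _
        exact (hasDerivAt_Gi_log k i hx).const_mul (c j i s)
      have hd : deriv (fun t : ℝ => phiRec k j t s) x
          = ∑ i ∈ Finset.range (j+1), c j i s * (x⁻¹ • Gi k (i+1) L) := by
        rw [hev.deriv_eq]; exact hF.deriv
      have hstep : phiRec k (j+1) x s
          = (x : ℂ) * deriv (fun t : ℝ => phiRec k j t s) x - (s + j) * phiRec k j x s := by
        simp only [phiRec]
      rw [hstep, hd, ih x hx hx1]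
      have hxmul : (x : ℂ) * ∑ i ∈ Finset.range (j+1), c j i s * (x⁻¹ • Gi k (i+1) L)
          = ∑ i ∈ Finset.range (j+1), c j i s * Gi k (i+1) L := by
        rw [Finset.mul_sum]
        apply Finset.sum_congr rfl
        intro i _
        rw [Complex.real_smul, Complex.ofReal_inv]
        field_simp
      rw [hxmul]
      have hsplit : ∑ i ∈ Finset.range (j+1+1), c (j+1) i s * Gi k i L
          = ∑ i ∈ Finset.range (j+1), (c j i s - (s + (j:ℂ)) * c j (i+1) s) * Gi k (i+1) L
            + (-(s + (j:ℂ)) * c j 0 s) * Gi k 0 L := by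
        rw [Finset.sum_range_succ']
        simp only [c]
      have h2 : ∑ i ∈ Finset.range (j+1), c j i s * Gi k i L
          = ∑ i ∈ Finset.range (j+1), c j (i+1) s * Gi k (i+1) L + c j 0 s * Gi k 0 L := by
        rw [Finset.sum_range_succ']
        congr 1
        rw [Finset.sum_range_succ, c_eq_zero s j (j+1) (by omega)]
        simp
      rw [hsplit, h2]
      simp only [sub_mul, neg_mul, mul_assoc]
      rw [Finset.sum_sub_distrib, ← Finset.mul_sum]
      ring

lemma cauchy_bound {f : ℂ → ℂ} {z : ℂ} (hf : DifferentiableOn ℂ f (Metric.closedBall z 1))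
    {M : ℝ} (hM : ∀ w ∈ Metric.closedBall z 1, ‖f w‖ ≤ M) (n : ℕ) :
    ‖iteratedDeriv n f z‖ ≤ n.factorial * M := by
  have hball : HasFPowerSeriesOnBall f (cauchyPowerSeries f z 1) z 1 := by
    have := hf.hasFPowerSeriesOnBall (R := 1) one_pos
    simpa using this
  have hn : iteratedDeriv n f z
      = n.factorial • (cauchyPowerSeries f z 1 n fun _ => (1:ℂ)) := by
    rw [iteratedDeriv_eq_iteratedFDeriv, ← hball.factorial_smul (1:ℂ) n]
  have hM0 : 0 ≤ M := le_trans (norm_nonneg _) (hM z (Metric.mem_closedBall_self one_pos.le))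
  have hcont : Continuous fun θ : ℝ => ‖f (circleMap z 1 θ)‖ := by
    exact (hf.continuousOn.comp_continuous (continuous_circleMap z 1)
      (fun θ => circleMap_mem_closedBall z one_pos.le θ)).norm
  have hint : (∫ θ in (0:ℝ)..2*Real.pi, ‖f (circleMap z 1 θ)‖) ≤ 2*Real.pi * M := by
    have h := intervalIntegral.integral_mono_on (by positivity : (0:ℝ) ≤ 2*Real.pi)
      (hcont.intervalIntegrable 0 (2*Real.pi)) (intervalIntegrable_const (μ := MeasureTheory.volume) (c := M))
      (fun θ _ => by
        exact hM _ (circleMap_mem_closedBall z one_pos.le θ))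
    simpa using h
  have hp : ‖cauchyPowerSeries f z 1 n‖ ≤ M := by
    have h := norm_cauchyPowerSeries_le f z 1 n
    simp only [abs_one, inv_one, one_pow, mul_one] at h
    refine h.trans ?_
    calc (2*Real.pi)⁻¹ * ∫ θ in (0:ℝ)..2*Real.pi, ‖f (circleMap z 1 θ)‖
        ≤ (2*Real.pi)⁻¹ * (2*Real.pi * M) := by
          apply mul_le_mul_of_nonneg_left hint (by positivity)
    _ = M := by
          field_simp
  have happ : ‖cauchyPowerSeries f z 1 n fun _ => (1:ℂ)‖ ≤ M := by
    refine le_trans ((cauchyPowerSeries f z 1 n).le_opNorm _) ?_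
    simpa using hp
  rw [hn]
  calc ‖n.factorial • (cauchyPowerSeries f z 1 n fun _ => (1:ℂ))‖
      ≤ (n.factorial : ℝ) * ‖cauchyPowerSeries f z 1 n fun _ => (1:ℂ)‖ := norm_nsmul_le
  _ ≤ n.factorial * M := by
      apply mul_le_mul_of_nonneg_left happ (by positivity)

lemma u_plus_one_le_exp {u : ℝ} (hu : 4 ≤ u) : u + 1 ≤ Real.exp (u - 1) := by
  have h := Real.add_one_le_exp ((u-1)/2)
  have h2 : Real.exp (u-1) = Real.exp ((u-1)/2) * Real.exp ((u-1)/2) := by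
    rw [← Real.exp_add]; ring_nf
  nlinarith [Real.exp_pos ((u-1)/2)]

lemma G_bound_far (k : ℕ) (hk : 1 ≤ k) {u : ℝ} (hu : 4 ≤ u) {w : ℂ}
    (hw : w ∈ Metric.closedBall (u : ℂ) 1) :
    ‖G k w‖ ≤
      (2 * Real.exp (((k:ℝ)-1)*(u+1))) * (2 * ((u+1) * Real.exp (1-u))) := by
  have hd : ‖w - (u:ℂ)‖ ≤ 1 := by
    simpa [Complex.dist_eq] using Metric.mem_closedBall.mp hw
  have hre : |w.re - u| ≤ 1 := by
    have h := Complex.abs_re_le_norm (w - (u:ℂ))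
    simpa using h.trans hd
  have him : |w.im| ≤ 1 := by
    have h := Complex.abs_im_le_norm (w - (u:ℂ))
    simpa using h.trans hd
  obtain ⟨hre1, hre2⟩ := abs_le.mp hre
  obtain ⟨him1, him2⟩ := abs_le.mp him
  have hπ : (3:ℝ) < Real.pi := by have := Real.pi_gt_d6; linarith
  have hk1 : (0:ℝ) ≤ (k:ℝ) - 1 := by
    have : (1:ℝ) ≤ (k:ℝ) := by exact_mod_cast hk
    linarith
  have habsz : ‖Complex.exp w‖ = Real.exp w.re := Complex.norm_exp w
  have hlog : Complex.log (Complex.exp w) = w := Complex.log_exp (by linarith) (by linarith)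
  -- lower bound on |exp w - 1|
  have hzlow : Real.exp (u-1) - 1 ≤ ‖Complex.exp w - 1‖ := by
    have h := norm_sub_norm_le (Complex.exp w) 1
    have : Real.exp (u-1) ≤ Real.exp w.re := Real.exp_le_exp.mpr (by linarith)
    simp only [norm_one] at h
    rw [habsz] at h
    linarith
  have hexp2 : (2:ℝ) ≤ Real.exp (u-1) := by
    have := Real.add_one_le_exp (u-1)
    linarith
  have hzhalf : Real.exp (u-1) / 2 ≤ ‖Complex.exp w - 1‖ := by linarith
  have hzpos : (0:ℝ) < ‖Complex.exp w - 1‖ := by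
    have := Real.exp_pos (u-1); linarith
  have hzne : Complex.exp w ≠ 1 := by
    intro h; rw [h] at hzpos; simp at hzpos
  -- bound on dslope
  have hds : ‖dslope Complex.log 1 (Complex.exp w)‖
      ≤ 2 * ((u+1) * Real.exp (1-u)) := by
    rw [dslope_of_ne _ hzne, slope_def_module, smul_eq_mul, Complex.log_one, sub_zero,
      hlog, norm_mul, norm_inv]
    have hwabs : ‖w‖ ≤ u + 1 := by
      have h := norm_sub_le_norm_sub_add_norm_sub w (u:ℂ) 0
      simp only [sub_zero] at h
      have h2 : ‖(u:ℂ)‖ = u := by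
        rw [Complex.norm_real, Real.norm_eq_abs, _root_.abs_of_nonneg (show (0:ℝ) ≤ u by linarith)]
      rw [h2] at h
      linarith
    have hinv : (‖Complex.exp w - 1‖)⁻¹ ≤ 2 * Real.exp (1-u) := by
      have h1 : (‖Complex.exp w - 1‖)⁻¹ ≤ (Real.exp (u-1) / 2)⁻¹ := by
        apply inv_anti₀ (by positivity) hzhalf
      have h2 : (Real.exp (u-1) / 2)⁻¹ = 2 * Real.exp (1-u) := by
        have : Real.exp (1-u) = (Real.exp (u-1))⁻¹ := by
          rw [← Real.exp_neg]; ring_nf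
        rw [this, inv_div]
        ring
      linarith
    calc (‖Complex.exp w - 1‖)⁻¹ * ‖w‖
        ≤ (2 * Real.exp (1-u)) * (u+1) := by
          apply mul_le_mul hinv hwabs (norm_nonneg _) (by positivity)
    _ = 2 * ((u+1) * Real.exp (1-u)) := by ring
  -- bound on power part
  have hpow : ‖Complex.exp w ^ (k-1) + 1‖ ≤ 2 * Real.exp (((k:ℝ)-1)*(u+1)) := by
    have h1 : ‖Complex.exp w ^ (k-1)‖ = Real.exp w.re ^ (k-1) := by
      rw [norm_pow, habsz]
    have h2 : Real.exp w.re ^ (k-1) = Real.exp (((k-1 : ℕ):ℝ) * w.re) := by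
      rw [← Real.exp_nat_mul]
    have hcast : ((k-1 : ℕ):ℝ) = (k:ℝ) - 1 := by
      have := Nat.cast_sub (R := ℝ) hk
      simpa using this
    have h3 : Real.exp (((k:ℝ)-1) * w.re) ≤ Real.exp (((k:ℝ)-1)*(u+1)) := by
      apply Real.exp_le_exp.mpr
      nlinarith
    have h4 : (1:ℝ) ≤ Real.exp (((k:ℝ)-1)*(u+1)) := by
      apply Real.one_le_exp
      nlinarith
    calc ‖Complex.exp w ^ (k-1) + 1‖
        ≤ ‖Complex.exp w ^ (k-1)‖ + 1 := by
          have := norm_add_le (Complex.exp w ^ (k-1)) 1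
          simpa using this
    _ ≤ Real.exp (((k:ℝ)-1)*(u+1)) + 1 := by
          rw [h1, h2, hcast] at *
          linarith
    _ ≤ 2 * Real.exp (((k:ℝ)-1)*(u+1)) := by linarith
  calc ‖G k w‖
      = ‖Complex.exp w ^ (k-1) + 1‖
        * ‖dslope Complex.log 1 (Complex.exp w)‖ := by
        rw [G, Psi, norm_mul]
  _ ≤ (2 * Real.exp (((k:ℝ)-1)*(u+1))) * (2 * ((u+1) * Real.exp (1-u))) := by
        apply mul_le_mul hpow hds (norm_nonneg _) (by positivity)

lemma continuous_Gi_real (k i : ℕ) : Continuous (fun u : ℝ => Gi k i ((u:ℝ):ℂ)) := by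
  rw [continuous_iff_continuousAt]
  intro u
  exact ((analyticOnNhd_Gi k i _ (ofReal_mem_S u)).continuousAt).comp
    Complex.continuous_ofReal.continuousAt

lemma closedBall_subset_S (u : ℝ) : Metric.closedBall ((u:ℝ):ℂ) 1 ⊆ S := by
  intro w hw
  have hd : ‖w - (u:ℂ)‖ ≤ 1 := by
    simpa [Complex.dist_eq] using Metric.mem_closedBall.mp hw
  have him : |w.im| ≤ 1 := by
    have h := Complex.abs_im_le_norm (w - (u:ℂ))
    simpa using h.trans hd
  show |w.im| < 2
  linarith

lemma Gi_bound (k i : ℕ) (hk : 1 ≤ k) : ∃ C : ℝ, 0 ≤ C ∧ ∀ u : ℝ, 0 ≤ u →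
    ‖Gi k i ((u:ℝ):ℂ)‖ ≤ C * Real.exp (((k:ℝ)-1) * u) := by
  have hk1 : (0:ℝ) ≤ (k:ℝ) - 1 := by
    have : (1:ℝ) ≤ (k:ℝ) := by exact_mod_cast hk
    linarith
  -- compact part
  obtain ⟨B, hB⟩ := (isCompact_Icc (a := (0:ℝ)) (b := 4)).exists_bound_of_continuousOn
    ((continuous_Gi_real k i).continuousOn)
  -- far part constant
  set C2 : ℝ := (i.factorial : ℝ) * ((2 * Real.exp ((k:ℝ)-1)) * 2) with hC2
  refine ⟨max (max B 0) C2, le_max_of_le_left (le_max_right _ _), fun u hu => ?_⟩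
  have hexp1 : (1:ℝ) ≤ Real.exp (((k:ℝ)-1) * u) := Real.one_le_exp (by positivity)
  rcases le_or_gt u 4 with h4 | h4
  · have hb := hB u ⟨hu, h4⟩
    calc ‖Gi k i ((u:ℝ):ℂ)‖ ≤ B := hb
    _ ≤ max (max B 0) C2 := le_max_of_le_left (le_max_left _ _)
    _ ≤ max (max B 0) C2 * Real.exp (((k:ℝ)-1) * u) := by
        nlinarith [le_max_of_le_left (le_max_right B (0:ℝ)) (c := C2)]
  · -- Cauchy estimate
    have hdiff : DifferentiableOn ℂ (G k) (Metric.closedBall ((u:ℝ):ℂ) 1) := by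
      intro w hw
      exact ((analyticOnNhd_Gi k 0 w (closedBall_subset_S u hw)).differentiableAt).differentiableWithinAt
    have hM : ∀ w ∈ Metric.closedBall ((u:ℝ):ℂ) 1, ‖G k w‖ ≤
        (2 * Real.exp (((k:ℝ)-1)*(u+1))) * (2 * ((u+1) * Real.exp (1-u))) :=
      fun w hw => G_bound_far k hk h4.le hw
    have hC := cauchy_bound hdiff hM i
    refine le_trans hC ?_
    have hsmall : (u+1) * Real.exp (1-u) ≤ 1 := by
      have h1 : u + 1 ≤ Real.exp (u-1) := u_plus_one_le_exp h4.le
      have h2 : Real.exp (1-u) = (Real.exp (u-1))⁻¹ := by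
        rw [← Real.exp_neg]; ring_nf
      rw [h2]
      rw [mul_inv_le_iff₀ (Real.exp_pos _)]
      linarith
    have hsplit : Real.exp (((k:ℝ)-1)*(u+1)) = Real.exp ((k:ℝ)-1) * Real.exp (((k:ℝ)-1)*u) := by
      rw [← Real.exp_add]; ring_nf
    calc (i.factorial : ℝ) * ((2 * Real.exp (((k:ℝ)-1)*(u+1))) * (2 * ((u+1) * Real.exp (1-u))))
        ≤ (i.factorial : ℝ) * ((2 * Real.exp (((k:ℝ)-1)*(u+1))) * (2 * 1)) := by
          gcongr
    _ = C2 * Real.exp (((k:ℝ)-1)*u) := by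
          rw [hC2, hsplit]; ring
    _ ≤ max (max B 0) C2 * Real.exp (((k:ℝ)-1)*u) := by
          apply mul_le_mul_of_nonneg_right (le_max_right _ _) (by positivity)

lemma Gi_bound_all (k n : ℕ) (hk : 1 ≤ k) : ∃ C : ℝ, 0 ≤ C ∧ ∀ i ≤ n, ∀ u : ℝ, 0 ≤ u →
    ‖Gi k i ((u:ℝ):ℂ)‖ ≤ C * Real.exp (((k:ℝ)-1) * u) := by
  induction n with
  | zero =>
      obtain ⟨C, hC0, hC⟩ := Gi_bound k 0 hk
      exact ⟨C, hC0, fun i hi u hu => by interval_cases i; exact hC u hu⟩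
  | succ n ih =>
      obtain ⟨C, hC0, hC⟩ := ih
      obtain ⟨C', hC'0, hC'⟩ := Gi_bound k (n+1) hk
      refine ⟨max C C', le_max_of_le_left hC0, fun i hi u hu => ?_⟩
      have hexp : (0:ℝ) ≤ Real.exp (((k:ℝ)-1) * u) := (Real.exp_pos _).le
      rcases Nat.lt_or_ge i (n+1) with h | h
      · exact (hC i (by omega) u hu).trans
          (mul_le_mul_of_nonneg_right (le_max_left _ _) hexp)
      · have : i = n+1 := by omega
        subst this
        exact (hC' u hu).trans (mul_le_mul_of_nonneg_right (le_max_right _ _) hexp)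

lemma phiRec_bound_of_gt_one (k m : ℕ) (hk : 1 ≤ k) :
    ∃ C : ℝ, 0 ≤ C ∧ ∀ x : ℝ, 1 < x → ∀ s : ℂ,
      ‖phiRec k m x s‖ ≤ C * (1 + ‖s‖) ^ m * x ^ (k-1) := by
  obtain ⟨B, hB0, hB⟩ := c_bound m
  obtain ⟨Cg, hCg0, hCg⟩ := Gi_bound_all k m hk
  refine ⟨(m+1) * (B * Cg), by positivity, fun x hx s => ?_⟩
  have hx0 : (0:ℝ) < x := by linarith
  have hlog0 : (0:ℝ) ≤ Real.log x := Real.log_nonneg hx.le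
  have hcast : ((k-1:ℕ):ℝ) = (k:ℝ) - 1 := by
    have := Nat.cast_sub (R := ℝ) hk
    simpa using this
  have hxpow : Real.exp (((k:ℝ)-1) * Real.log x) = x ^ (k-1 : ℕ) := by
    rw [mul_comm, ← Real.rpow_def_of_pos hx0, ← hcast, Real.rpow_natCast]
  rw [phiRec_eq k m s x hx0 (by linarith)]
  calc ‖∑ i ∈ Finset.range (m+1), c m i s * Gi k i ((Real.log x : ℝ) : ℂ)‖
      ≤ ∑ i ∈ Finset.range (m+1),
          ‖c m i s * Gi k i ((Real.log x : ℝ) : ℂ)‖ :=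
        norm_sum_le _ _
  _ ≤ ∑ _i ∈ Finset.range (m+1),
        (B * (1 + ‖s‖) ^ m) * (Cg * (x ^ (k-1 : ℕ))) := by
        apply Finset.sum_le_sum
        intro i hi
        rw [norm_mul]
        have h1 := hB i s
        have h2 := hCg i (by simpa using Nat.lt_succ_iff.mp (Finset.mem_range.mp hi))
          (Real.log x) hlog0
        rw [hxpow] at h2
        exact mul_le_mul h1 h2 (norm_nonneg _) (by positivity)
  _ = (m+1) * (B * Cg) * (1 + ‖s‖) ^ m * x ^ (k-1 : ℕ) := by
        rw [Finset.sum_const, Finset.card_range]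
        push_cast
        ring

lemma phiRec_bound_at_one (k m : ℕ) (hk : 1 ≤ k) :
    ∃ C : ℝ, 0 ≤ C ∧ ∀ s : ℂ,
      ‖phiRec k m 1 s‖ ≤ C * (1 + ‖s‖) ^ m := by
  induction m with
  | zero =>
      refine ⟨k, Nat.cast_nonneg k, fun s => ?_⟩
      have : phiRec k 0 (1:ℝ) s = (k:ℂ) := by simp [phiRec]
      rw [this]
      simp [Complex.norm_natCast]
  | succ m ih =>
      obtain ⟨C, hC0, hC⟩ := ih
      obtain ⟨B, hB0, hB⟩ := c_bound m
      obtain ⟨Cg, hCg0, hCg⟩ := Gi_bound_all k (m+1) hk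
      set D : ℝ := (m+1) * (B * Cg) with hD
      refine ⟨D + (m+1) * C, by positivity, fun s => ?_⟩
      set g : ℝ → ℂ := fun t => phiRec k m t s with hg
      set F : ℝ → ℂ := fun t => ∑ i ∈ Finset.range (m+1),
        c m i s * Gi k i ((Real.log t : ℝ) : ℂ) with hF
      have hFd : HasDerivAt F (∑ i ∈ Finset.range (m+1),
          c m i s * ((1:ℝ)⁻¹ • Gi k (i+1) ((Real.log 1 : ℝ) : ℂ))) 1 := by
        apply HasDerivAt.fun_sum
        intro i _
        exact (hasDerivAt_Gi_log k i one_pos).const_mul (c m i s)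
      have hFderiv : deriv F 1 = ∑ i ∈ Finset.range (m+1),
          c m i s * Gi k (i+1) ((0:ℝ):ℂ) := by
        rw [hFd.deriv]
        simp [Real.log_one]
      have hsumbound : ‖∑ i ∈ Finset.range (m+1),
          c m i s * Gi k (i+1) ((0:ℝ):ℂ)‖ ≤ D * (1 + ‖s‖) ^ m := by
        calc ‖∑ i ∈ Finset.range (m+1), c m i s * Gi k (i+1) ((0:ℝ):ℂ)‖
            ≤ ∑ i ∈ Finset.range (m+1),
              ‖c m i s * Gi k (i+1) ((0:ℝ):ℂ)‖ := norm_sum_le _ _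
        _ ≤ ∑ _i ∈ Finset.range (m+1), (B * (1 + ‖s‖) ^ m) * Cg := by
              apply Finset.sum_le_sum
              intro i hi
              rw [norm_mul]
              have h2 := hCg (i+1) (by
                have := Finset.mem_range.mp hi; omega) 0 le_rfl
              simp only [mul_zero, Real.exp_zero, mul_one] at h2
              exact mul_le_mul (hB i s) h2 (norm_nonneg _) (by positivity)
        _ = D * (1 + ‖s‖) ^ m := by
              rw [Finset.sum_const, Finset.card_range, hD]
              push_cast
              ring
      have hder : ‖deriv g 1‖ ≤ D * (1 + ‖s‖) ^ m := by
        by_cases hdiff : DifferentiableAt ℝ g 1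
        · have hpos : ∀ᶠ t in nhds (1:ℝ), 0 < t := eventually_gt_nhds one_pos
          have hpunct : ∀ᶠ t in nhdsWithin (1:ℝ) {(1:ℝ)}ᶜ, g t = F t := by
            have h1 : ∀ᶠ t in nhdsWithin (1:ℝ) {(1:ℝ)}ᶜ, 0 < t :=
              eventually_nhdsWithin_of_eventually_nhds hpos
            have h2 : ∀ᶠ t in nhdsWithin (1:ℝ) {(1:ℝ)}ᶜ, t ≠ 1 := by
              filter_upwards [self_mem_nhdsWithin] with t ht
              exact ht
            filter_upwards [h1, h2] with t ht hne
            exact phiRec_eq k m s t ht hne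
          have htg : Filter.Tendsto g (nhdsWithin (1:ℝ) {(1:ℝ)}ᶜ) (nhds (g 1)) :=
            (hdiff.continuousAt.tendsto).mono_left nhdsWithin_le_nhds
          have htF : Filter.Tendsto F (nhdsWithin (1:ℝ) {(1:ℝ)}ᶜ) (nhds (F 1)) :=
            (hFd.continuousAt.tendsto).mono_left nhdsWithin_le_nhds
          have htg' : Filter.Tendsto g (nhdsWithin (1:ℝ) {(1:ℝ)}ᶜ) (nhds (F 1)) :=
            htF.congr' (Filter.EventuallyEq.symm hpunct)
          have hg1 : g 1 = F 1 := tendsto_nhds_unique htg htg'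
          have hEq : g =ᶠ[nhds (1:ℝ)] F := by
            filter_upwards [hpos] with t ht
            by_cases hne : t = 1
            · subst hne; exact hg1
            · exact phiRec_eq k m s t ht hne
          rw [hEq.deriv_eq, hFderiv]
          exact hsumbound
        · rw [deriv_zero_of_not_differentiableAt hdiff]
          simp only [norm_zero]
          positivity
      have hstep : phiRec k (m+1) (1:ℝ) s
          = ((1:ℝ):ℂ) * deriv g 1 - (s + m) * phiRec k m 1 s := by
        simp only [phiRec]
        rfl
      rw [hstep]
      have habs : (0:ℝ) ≤ ‖s‖ := norm_nonneg s
      have hsm : ‖s + (m:ℂ)‖ ≤ (m+1) * (1 + ‖s‖) := by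
        calc ‖s + (m:ℂ)‖ ≤ ‖s‖ + ‖(m:ℂ)‖ :=
              norm_add_le _ _
        _ = ‖s‖ + m := by simp
        _ ≤ (m+1) * (1 + ‖s‖) := by nlinarith
      have hpow : (0:ℝ) ≤ (1 + ‖s‖)^m := by positivity
      calc ‖((1:ℝ):ℂ) * deriv g 1 - (s + m) * phiRec k m 1 s‖
          ≤ ‖((1:ℝ):ℂ) * deriv g 1‖ + ‖(s + m) * phiRec k m 1 s‖ := by
            rw [sub_eq_add_neg]
            exact (norm_add_le _ _).trans (by rw [norm_neg])
      _ ≤ D * (1 + ‖s‖) ^ m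
            + ((m+1) * (1 + ‖s‖)) * (C * (1 + ‖s‖) ^ m) := by
            rw [norm_mul, norm_mul]
            have h1 : ‖((1:ℝ):ℂ)‖ = 1 := by simp
            rw [h1, one_mul]
            have h2 := mul_le_mul hsm (hC s) (norm_nonneg _) (by positivity)
            linarith [hder]
      _ ≤ (D + (m+1) * C) * (1 + ‖s‖) ^ (m+1) := by
            rw [pow_succ]
            have hD0 : (0:ℝ) ≤ D := by rw [hD]; positivity
            nlinarith [mul_nonneg hD0 hpow, mul_nonneg (mul_nonneg hC0 hpow) habs]

end PhiAux

theorem phiRec_bound (k : ℕ) (hk : 1 ≤ k) (m : ℕ) :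
    ∃ C : ℝ, ∀ x : ℝ, 1 ≤ x → ∀ s : ℂ,
      ‖phiRec k m x s‖ ≤ C * (1 + ‖s‖) ^ m * x ^ (k - 1) := by
  obtain ⟨C1, h10, h1⟩ := PhiAux.phiRec_bound_of_gt_one k m hk
  obtain ⟨C2, h20, h2⟩ := PhiAux.phiRec_bound_at_one k m hk
  refine ⟨max C1 C2, fun x hx s => ?_⟩
  have hpow : (0:ℝ) ≤ (1 + ‖s‖) ^ m := by positivity
  rcases eq_or_lt_of_le hx with h | h
  · subst h
    calc ‖phiRec k m 1 s‖ ≤ C2 * (1 + ‖s‖) ^ m := h2 s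
    _ ≤ max C1 C2 * (1 + ‖s‖) ^ m :=
        mul_le_mul_of_nonneg_right (le_max_right _ _) hpow
    _ = max C1 C2 * (1 + ‖s‖) ^ m * (1:ℝ) ^ (k-1) := by
        rw [one_pow, mul_one]
  · calc ‖phiRec k m x s‖ ≤ C1 * (1 + ‖s‖) ^ m * x ^ (k-1) := h1 x h s
    _ ≤ max C1 C2 * (1 + ‖s‖) ^ m * x ^ (k-1) := by
        have hx0 : (0:ℝ) ≤ x ^ (k-1) := by positivity
        apply mul_le_mul_of_nonneg_right _ hx0
        exact mul_le_mul_of_nonneg_right (le_max_left _ _) hpow
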